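/- Let (π, D) be a pair of a probability row vector π ∈ ℝⁿ and an n×n real matrix D that represents the unit exponential distribution, and set d := −D·𝟙. Let p ∈ (0,1), q ∈ [0,1], and μ := (1 − q + pq)/p. Define the (n+1)-dimensional row vector π' := ((1−p)·π, p) and the (n+1)×(n+1) block matrix D' := [[D, (1−q)·d], [0, −μ]] (i.e. the first n rows are (D, (1−q)d) and the last row is (0,…,0,−μ)). Then (π', D') represents the unit exponential distribution. -/

import Mathlib

open Matrix

section AuxExp

open NormedSpace

attribute [local instance] Matrix.linftyOpNormedAddCommGroup Matrix.linftyOpNormedRing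
  Matrix.linftyOpNormedAlgebra

variable {m : ℕ}

lemma entryDeriv (A : Matrix (Fin m) (Fin m) ℝ) (s : ℝ) (i j : Fin m) :
    HasDerivAt (fun u : ℝ => exp (u • A) i j) ((exp (s • A) * A) i j) s := by
  have h := hasDerivAt_exp_smul_const (𝕂 := ℝ) A s
  exact (LinearMap.toContinuousLinearMap
    (Matrix.entryLinearMap ℝ ℝ i j)).hasFDerivAt.comp_hasDerivAt s h

lemma entryDerivNeg (A : Matrix (Fin m) (Fin m) ℝ) (s : ℝ) (i j : Fin m) :
    HasDerivAt (fun u : ℝ => exp ((-u) • A) i j) (-((A * exp ((-s) • A)) i j)) s := by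
  have h0 := hasDerivAt_exp_smul_const' (𝕂 := ℝ) A (-s)
  have h : HasDerivAt (fun u : ℝ => exp (u • A) i j) ((A * exp ((-s) • A)) i j) (-s) :=
    (LinearMap.toContinuousLinearMap
      (Matrix.entryLinearMap ℝ ℝ i j)).hasFDerivAt.comp_hasDerivAt (-s) h0
  have h2 := h.comp s (hasDerivAt_neg s)
  simpa [Function.comp_def, mul_neg_one] using h2

lemma vecMul_eq_sum' (v : Fin m → ℝ) (M : Matrix (Fin m) (Fin m) ℝ) (i : Fin m) :
    (v ᵥ* M) i = ∑ k, v k * M k i := rfl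

lemma vecMulExpDeriv (A : Matrix (Fin m) (Fin m) ℝ) (v : Fin m → ℝ) (s : ℝ) (i : Fin m) :
    HasDerivAt (fun u : ℝ => (v ᵥ* exp (u • A)) i) ((v ᵥ* (exp (s • A) * A)) i) s := by
  simp only [Matrix.vecMul, dotProduct]
  exact HasDerivAt.fun_sum fun k _ => (entryDeriv A s k i).const_mul (v k)

end AuxExp

/-- `(π, D)` represents the unit exponential distribution:
`π · exp(tD) · 𝟙 = e^{-t}` for all `t ≥ 0`. -/
def ReprUnitExp {n : ℕ} (π : Fin n → ℝ) (D : Matrix (Fin n) (Fin n) ℝ) : Prop :=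
  ∀ t : ℝ, 0 ≤ t → (π ᵥ* NormedSpace.exp (t • D)) ⬝ᵥ (fun _ => 1) = Real.exp (-t)

theorem stmt8 {n : ℕ} (π : Fin n → ℝ) (D : Matrix (Fin n) (Fin n) ℝ)
    (hπnn : ∀ i, 0 ≤ π i) (hπsum : ∑ i, π i = 1)
    (hrep : ReprUnitExp π D)
    (d : Fin n → ℝ) (hd : d = (-D) *ᵥ (fun _ => 1))
    (p q μ : ℝ) (hp : p ∈ Set.Ioo (0 : ℝ) 1) (hq : q ∈ Set.Icc (0 : ℝ) 1)
    (hμ : μ = (1 - q + p * q) / p) :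
    ReprUnitExp (Fin.snoc (fun i => (1 - p) * π i) p)
      (Matrix.of (Fin.snoc (fun i => Fin.snoc (D i) ((1 - q) * d i))
        (Fin.snoc (fun _ => 0) (-μ)))) := by
  obtain ⟨hp0, hp1⟩ := hp
  set Dm : Matrix (Fin (n+1)) (Fin (n+1)) ℝ :=
    Matrix.of (Fin.snoc (fun i => Fin.snoc (D i) ((1 - q) * d i))
      (Fin.snoc (fun _ => 0) (-μ))) with hDm
  intro t ht
  -- Step 1: π ᵥ* exp(sD) ⬝ᵥ d = exp (-s) for s ≥ 0
  have hfder : ∀ s : ℝ, HasDerivAt (fun u : ℝ => (π ᵥ* NormedSpace.exp (u • D)) ⬝ᵥ (fun _ => 1))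
      (-((π ᵥ* NormedSpace.exp (s • D)) ⬝ᵥ d)) s := by
    intro s
    have h1 : HasDerivAt (fun u : ℝ => (π ᵥ* NormedSpace.exp (u • D)) ⬝ᵥ (fun _ => 1))
        ((π ᵥ* (NormedSpace.exp (s • D) * D)) ⬝ᵥ (fun _ => (1:ℝ))) s := by
      simp only [dotProduct, mul_one]
      exact HasDerivAt.fun_sum fun j _ => vecMulExpDeriv D π s j
    convert h1 using 1
    rw [hd, dotProduct_mulVec, Matrix.vecMul_neg, neg_dotProduct, neg_neg,
      Matrix.vecMul_vecMul]
  have hπd : ∀ s : ℝ, 0 ≤ s → (π ᵥ* NormedSpace.exp (s • D)) ⬝ᵥ d = Real.exp (-s) := by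
    have hcont : Continuous fun s : ℝ => (π ᵥ* NormedSpace.exp (s • D)) ⬝ᵥ d := by
      simp only [dotProduct]
      refine continuous_finset_sum _ fun k _ => ?_
      exact continuous_iff_continuousAt.mpr fun s =>
        ((vecMulExpDeriv D π s k).continuousAt).mul continuousAt_const
    have heq : Set.EqOn (fun s : ℝ => (π ᵥ* NormedSpace.exp (s • D)) ⬝ᵥ d)
        (fun s => Real.exp (-s)) (Set.Ioi 0) := by
      intro s hs
      have hs' : (0:ℝ) < s := hs
      have hev : (fun u : ℝ => (π ᵥ* NormedSpace.exp (u • D)) ⬝ᵥ (fun _ => 1))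
          =ᶠ[nhds s] fun u => Real.exp (-u) := by
        filter_upwards [Ioi_mem_nhds hs'] with u hu
        exact hrep u (le_of_lt hu)
      have h2 : HasDerivAt (fun u : ℝ => Real.exp (-u))
          (-((π ᵥ* NormedSpace.exp (s • D)) ⬝ᵥ d)) s :=
        (hfder s).congr_of_eventuallyEq hev.symm
      have h3 : HasDerivAt (fun u : ℝ => Real.exp (-u)) (-Real.exp (-s)) s := by
        simpa [Function.comp_def] using (Real.hasDerivAt_exp (-s)).comp s (hasDerivAt_neg s)
      have h4 := h2.unique h3
      simpa using neg_injective h4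
    intro s hs
    have hmem : s ∈ closure (Set.Ioi (0:ℝ)) := by rwa [closure_Ioi]
    exact heq.closure hcont (Real.continuous_exp.comp continuous_neg) hmem
  -- the row vector r
  set r : ℝ → Fin (n+1) → ℝ :=
    fun s => Fin.snoc (fun i => (1 - p) * (π ᵥ* NormedSpace.exp (s • D)) i)
      (p * Real.exp (-s)) with hr
  have hμp : μ * p = 1 - q + p * q := by rw [hμ]; field_simp
  -- derivative of r
  have hrd : ∀ s : ℝ, 0 ≤ s → ∀ j, HasDerivAt (fun u => r u j) ((r s ᵥ* Dm) j) s := by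
    intro s hs j
    induction j using Fin.lastCases with
    | last =>
      have h1 : HasDerivAt (fun u : ℝ => r u (Fin.last n)) (p * (Real.exp (-s) * (-1))) s := by
        simp only [hr, Fin.snoc_last]
        exact ((Real.hasDerivAt_exp (-s)).comp s (hasDerivAt_neg s)).const_mul p
      convert h1 using 1
      have hsum : (r s ᵥ* Dm) (Fin.last n)
          = ∑ k : Fin n, ((1 - p) * (π ᵥ* NormedSpace.exp (s • D)) k) * ((1 - q) * d k)
            + (p * Real.exp (-s)) * (-μ) := by
        rw [vecMul_eq_sum', Fin.sum_univ_castSucc]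
        simp [hr, hDm]
      rw [hsum]
      have h2 : ∑ k : Fin n, ((1 - p) * (π ᵥ* NormedSpace.exp (s • D)) k) * ((1 - q) * d k)
          = ((1 - p) * (1 - q)) * ((π ᵥ* NormedSpace.exp (s • D)) ⬝ᵥ d) := by
        simp only [dotProduct, Finset.mul_sum]
        exact Finset.sum_congr rfl fun k _ => by ring
      rw [h2, hπd s hs]
      linear_combination (-(Real.exp (-s))) * hμp
    | cast i =>
      have h1 : HasDerivAt (fun u : ℝ => r u (Fin.castSucc i))
          ((1 - p) * (π ᵥ* (NormedSpace.exp (s • D) * D)) i) s := by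
        simp only [hr, Fin.snoc_castSucc]
        exact (vecMulExpDeriv D π s i).const_mul (1 - p)
      convert h1 using 1
      have hsum : (r s ᵥ* Dm) (Fin.castSucc i)
          = ∑ k : Fin n, ((1 - p) * (π ᵥ* NormedSpace.exp (s • D)) k) * D k i := by
        rw [vecMul_eq_sum', Fin.sum_univ_castSucc]
        simp [hr, hDm]
      rw [hsum, ← Matrix.vecMul_vecMul,
        vecMul_eq_sum' (π ᵥ* NormedSpace.exp (s • D)) D i, Finset.mul_sum]
      exact Finset.sum_congr rfl fun k _ => by ring
  -- continuity of components of r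
  have hrc : ∀ i, Continuous fun u => r u i := by
    intro i
    induction i using Fin.lastCases with
    | last =>
      simp only [hr, Fin.snoc_last]
      exact continuous_const.mul (Real.continuous_exp.comp continuous_neg)
    | cast i =>
      simp only [hr, Fin.snoc_castSucc]
      exact continuous_const.mul (continuous_iff_continuousAt.mpr fun s =>
        (vecMulExpDeriv D π s i).continuousAt)
  -- F has zero derivative
  have hF0 : ∀ s : ℝ, 0 ≤ s → ∀ j,
      HasDerivAt (fun u => (r u ᵥ* NormedSpace.exp ((-u) • Dm)) j) 0 s := by
    intro s hs j
    have hsum : ∀ u : ℝ, (r u ᵥ* NormedSpace.exp ((-u) • Dm)) j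
        = ∑ i, r u i * NormedSpace.exp ((-u) • Dm) i j := by
      intro u; simp [Matrix.vecMul, dotProduct]
    simp only [hsum]
    have h1 : HasDerivAt (fun u => ∑ i, r u i * NormedSpace.exp ((-u) • Dm) i j)
        (∑ i, ((r s ᵥ* Dm) i * NormedSpace.exp ((-s) • Dm) i j
          + r s i * (-((Dm * NormedSpace.exp ((-s) • Dm)) i j)))) s :=
      HasDerivAt.fun_sum fun i _ => (hrd s hs i).mul (entryDerivNeg Dm s i j)
    convert h1 using 1
    have h2 : ∑ i, ((r s ᵥ* Dm) i * NormedSpace.exp ((-s) • Dm) i j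
          + r s i * (-((Dm * NormedSpace.exp ((-s) • Dm)) i j)))
        = ((r s ᵥ* Dm) ᵥ* NormedSpace.exp ((-s) • Dm)) j
          - (r s ᵥ* (Dm * NormedSpace.exp ((-s) • Dm))) j := by
      rw [Finset.sum_add_distrib]
      simp [Matrix.vecMul, dotProduct, sub_eq_add_neg]
    rw [h2, Matrix.vecMul_vecMul, sub_self]
  -- continuity of F components
  have hFc : ∀ j, Continuous fun u : ℝ => (r u ᵥ* NormedSpace.exp ((-u) • Dm)) j := by
    intro j
    have hsum : ∀ u : ℝ, (r u ᵥ* NormedSpace.exp ((-u) • Dm)) j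
        = ∑ i, r u i * NormedSpace.exp ((-u) • Dm) i j := by
      intro u; simp [Matrix.vecMul, dotProduct]
    simp only [hsum]
    refine continuous_finset_sum _ fun i _ => (hrc i).mul ?_
    exact continuous_iff_continuousAt.mpr fun s => (entryDerivNeg Dm s i j).continuousAt
  -- constancy on [0, t]
  have hFconst : ∀ j, (r t ᵥ* NormedSpace.exp ((-t) • Dm)) j
      = (r 0 ᵥ* NormedSpace.exp ((-(0:ℝ)) • Dm)) j := by
    intro j
    have h := constant_of_has_deriv_right_zero (a := 0) (b := t)
      ((hFc j).continuousOn)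
      (fun x hx => ((hF0 x hx.1 j)).hasDerivWithinAt)
    exact h t (Set.right_mem_Icc.mpr ht)
  have hEneg0 : NormedSpace.exp ((-(0:ℝ)) • Dm) = 1 := by
    simp [NormedSpace.exp_zero]
  have hr0 : r 0 = (Fin.snoc (fun i => (1 - p) * π i) p : Fin (n+1) → ℝ) := by
    funext j
    induction j using Fin.lastCases with
    | last => simp [hr, Real.exp_zero]
    | cast i => simp [hr, NormedSpace.exp_zero]
  have hπp : (Fin.snoc (fun i => (1 - p) * π i) p : Fin (n+1) → ℝ)
      = r t ᵥ* NormedSpace.exp ((-t) • Dm) := by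
    funext j
    rw [hFconst j, hEneg0, Matrix.vecMul_one, hr0]
  have hmul : NormedSpace.exp ((-t) • Dm) * NormedSpace.exp (t • Dm) = 1 := by
    rw [← Matrix.exp_add_of_commute _ _ (((Commute.refl Dm).smul_left (-t)).smul_right t)]
    rw [← add_smul, neg_add_cancel, zero_smul, NormedSpace.exp_zero]
  have hkey : (Fin.snoc (fun i => (1 - p) * π i) p : Fin (n+1) → ℝ) ᵥ* NormedSpace.exp (t • Dm)
      = r t := by
    rw [hπp, Matrix.vecMul_vecMul, hmul, Matrix.vecMul_one]
  rw [hkey]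
  -- final computation
  have hrepT := hrep t ht
  simp only [dotProduct, mul_one] at hrepT ⊢
  rw [Fin.sum_univ_castSucc]
  simp only [hr, Fin.snoc_castSucc, Fin.snoc_last]
  rw [← Finset.mul_sum, hrepT]
  ring
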